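/- Abstract rewriting theorem (Aoto–Toyama, as used for cut elimination modulo rule commutation): let ⊢⊣, →, and ⇝ be relations on a set A such that ⊢⊣ is symmetric and ⇝ ⊆ ⊢⊣; set ⇒ = → ∪ ⇝. Suppose (i) the relation → · ⇝* is strongly normalizing; (ii) ← · → ⊆ ⇒* · (⊢⊣)^= · ⇐*; (iii) ⊢⊣ · → ⊆ ((⊢⊣)^= · ⇐*) ∪ (→ · ⇒* · (⊢⊣)^= · ⇐*). Then → is Church–Rosser modulo the equivalence closure ∼ of ⊢⊣, i.e., (→ ∪ ← ∪ ⊢⊣)* ⊆ →* · ∼ · ←*. -/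

import Mathlib

namespace AotoToyamaAux
open Relation



variable {A : Type*}

/-! ### Multiset order (Dershowitz–Manna style, via single replacement steps) -/

/-- Single-step multiset order: replace one element `x` by a multiset `K` of
elements all `σ`-below `x`. -/
def MLt (σ : A → A → Prop) (M N : Multiset A) : Prop :=
  ∃ x K N', N = x ::ₘ N' ∧ M = K + N' ∧ ∀ k ∈ K, σ k x

theorem mlt_acc_zero (σ : A → A → Prop) : Acc (MLt σ) 0 := by
  constructor
  rintro M ⟨x, K, N', h1, -, -⟩
  exact absurd h1.symm (Multiset.cons_ne_zero)

theorem mlt_pred_cons {σ : A → A → Prop} {M : Multiset A} {x : A} {N : Multiset A}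
    (h : MLt σ M (x ::ₘ N)) :
    (∃ K, (∀ k ∈ K, σ k x) ∧ M = K + N) ∨ (∃ M', MLt σ M' N ∧ M = x ::ₘ M') := by
  obtain ⟨y, K, N', h1, h2, h3⟩ := h
  rcases Multiset.cons_eq_cons.1 h1 with ⟨rfl, rfl⟩ | ⟨hne, cs, hN, hN'⟩
  · exact Or.inl ⟨K, h3, h2⟩
  · refine Or.inr ⟨K + cs, ⟨y, K, cs, hN, rfl, h3⟩, ?_⟩
    rw [h2, hN', Multiset.add_cons]

theorem mlt_acc_cons {σ : A → A → Prop} (x : A) (hx : Acc σ x) :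
    ∀ M : Multiset A, Acc (MLt σ) M → Acc (MLt σ) (x ::ₘ M) := by
  induction hx with
  | intro x _ ihx =>
    intro M hM
    induction hM with
    | intro M hM ihM =>
      constructor
      intro N hN
      rcases mlt_pred_cons hN with ⟨K, hK, rfl⟩ | ⟨M', hM', rfl⟩
      · -- replace `x` by `K`
        clear hN
        induction K using Multiset.induction with
        | empty => simpa using Acc.intro M hM
        | cons k K ihK =>
          rw [Multiset.cons_add]
          exact ihx k (hK k (Multiset.mem_cons_self _ _))
            _ (ihK fun k' hk' => hK k' (Multiset.mem_cons_of_mem hk'))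
      · exact ihM M' hM'

theorem mlt_wf {σ : A → A → Prop} (hσ : WellFounded σ) : WellFounded (MLt σ) := by
  constructor
  intro M
  induction M using Multiset.induction with
  | empty => exact mlt_acc_zero σ
  | cons x M ih => exact mlt_acc_cons x (hσ.apply x) M ih

/-- Transitive closure of the multiset order. -/
def MLT (σ : A → A → Prop) : Multiset A → Multiset A → Prop :=
  Relation.TransGen (MLt σ)

theorem mlt_wf' {σ : A → A → Prop} (hσ : WellFounded σ) : WellFounded (MLT σ) :=
  (mlt_wf hσ).transGen

theorem mlt_add {σ : A → A → Prop} {M N : Multiset A} (z : Multiset A)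
    (h : MLt σ M N) : MLt σ (z + M) (z + N) := by
  obtain ⟨x, K, N', rfl, rfl, h3⟩ := h
  exact ⟨x, K, z + N', by rw [Multiset.add_cons], by
    simp [add_comm, add_left_comm, add_assoc, Multiset.cons_swap], h3⟩

theorem MLT.add {σ : A → A → Prop} {M N : Multiset A} (z : Multiset A)
    (h : MLT σ M N) : MLT σ (z + M) (z + N) :=
  Relation.TransGen.lift (fun m => z + m) (fun _ _ h => mlt_add z h) _ _ h

/-- Dershowitz–Manna decrease: replace a nonempty `X` by `Y`, every element of
which is below some element of `X`. -/
theorem mlt_dm {σ : A → A → Prop} :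
    ∀ X : Multiset A, X ≠ 0 → ∀ Y Z : Multiset A,
      (∀ y ∈ Y, ∃ x ∈ X, σ y x) → MLT σ (Y + Z) (X + Z) := by
  classical
  intro X
  induction X using Multiset.induction with
  | empty => intro h; exact absurd rfl h
  | cons x X ih =>
    intro _ Y Z hY
    by_cases hX : X = 0
    · subst hX
      refine Relation.TransGen.single ⟨x, Y, Z, by simp [Multiset.cons_add], rfl, ?_⟩
      intro y hy
      obtain ⟨x', hx', hσ'⟩ := hY y hy
      simp only [Multiset.mem_cons, Multiset.notMem_zero, or_false] at hx'
      rwa [hx'] at hσ'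
    · -- split `Y` into the part dominated by `x` and the rest
      set Y₁ := Y.filter (fun y => σ y x) with hY₁
      set Y₂ := Y.filter (fun y => ¬ σ y x) with hY₂
      have hsplit : Y₁ + Y₂ = Y := Multiset.filter_add_not _ Y
      have step1 : MLt σ (Y₁ + (X + Z)) (x ::ₘ X + Z) := by
        refine ⟨x, Y₁, X + Z, by rw [Multiset.cons_add], rfl, ?_⟩
        intro k hk
        exact (Multiset.mem_filter.1 hk).2
      have step2 : MLT σ (Y₂ + (Y₁ + Z)) (X + (Y₁ + Z)) := by
        refine ih hX Y₂ (Y₁ + Z) ?_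
        intro y hy
        have hy' := Multiset.mem_filter.1 hy
        obtain ⟨x', hx', hσ'⟩ := hY y hy'.1
        rcases Multiset.mem_cons.1 hx' with rfl | hx'
        · exact absurd hσ' hy'.2
        · exact ⟨x', hx', hσ'⟩
      have e1 : Y₂ + (Y₁ + Z) = Y + Z := by
        rw [← hsplit]; simp [add_comm, add_left_comm, add_assoc, Multiset.cons_swap]
      have e2 : X + (Y₁ + Z) = Y₁ + (X + Z) := by
        simp [add_comm, add_left_comm, add_assoc, Multiset.cons_swap]
      rw [e1, e2] at step2
      exact step2.trans (Relation.TransGen.single step1)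

variable {A : Type*}

section Base
variable (r w : A → A → Prop)

/-- `S = → · ⇝*` -/
def SS : A → A → Prop := Relation.Comp r (Relation.ReflTransGen w)

/-- base order on labelled elements: `(p, i) ≺ (q, j)` iff `q S⁺ p`, or
`p = q` and `i = false < true = j`. -/
def sigma : A × Bool → A × Bool → Prop :=
  Prod.Lex (fun u v : A => Relation.TransGen (SS r w) v u)
    (fun i j : Bool => i = false ∧ j = true)

end Base

variable {r w : A → A → Prop}

theorem wf_flipS
    (hSN : ∀ f : ℕ → A, ¬ (∀ n : ℕ, Relation.Comp r (Relation.ReflTransGen w) (f n) (f (n + 1)))) :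
    WellFounded (fun p q => SS r w q p) := by
  by_contra hwf
  have ⟨a, ha⟩ : ∃ a, ¬ Acc (fun p q => SS r w q p) a := by
    by_contra h
    push_neg at h
    exact hwf ⟨h⟩
  have ex : ∀ x : {x : A // ¬ Acc (fun p q => SS r w q p) x},
      ∃ y, SS r w x.1 y ∧ ¬ Acc (fun p q => SS r w q p) y := by
    rintro ⟨x, hx⟩
    by_contra hc
    push_neg at hc
    exact hx (Acc.intro x fun y hy => not_not.1 fun hny => absurd (hc y hy) (by simpa using hny))
  let g : {x : A // ¬ Acc (fun p q => SS r w q p) x} → {x : A // ¬ Acc (fun p q => SS r w q p) x} :=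
    fun x => ⟨Classical.choose (ex x), (Classical.choose_spec (ex x)).2⟩
  have hg : ∀ x, SS r w x.1 (g x).1 := fun x => (Classical.choose_spec (ex x)).1
  let F : ℕ → {x : A // ¬ Acc (fun p q => SS r w q p) x} := fun n => g^[n] ⟨a, ha⟩
  refine hSN (fun n => (F n).1) fun n => ?_
  show Relation.Comp r (Relation.ReflTransGen w) (F n).1 (F (n + 1)).1
  have h : F (n + 1) = g (F n) := Function.iterate_succ_apply' g n _
  rw [h]
  exact hg (F n)

theorem wf_sigma
    (hSN : ∀ f : ℕ → A, ¬ (∀ n : ℕ, Relation.Comp r (Relation.ReflTransGen w) (f n) (f (n + 1)))) :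
    WellFounded (sigma r w) := by
  have h1 : WellFounded (fun u v : A => Relation.TransGen (SS r w) v u) := by
    have := (wf_flipS hSN).transGen
    refine Subrelation.wf (r := Relation.TransGen (fun p q => SS r w q p)) ?_ this
    intro a b h
    exact (Relation.transGen_swap (r := SS r w) (a := a) (b := b)).2 h
  have h2 : WellFounded (fun i j : Bool => i = false ∧ j = true) := by
    constructor
    intro b
    constructor
    rintro i ⟨rfl, -⟩
    constructor
    rintro j ⟨-, h⟩
    cases h
  exact h1.prod_lex h2

/-- `r x p` and `p ⇒* u` imply `x S⁺ u`. -/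
theorem rS_aux {p u : A} (h : Relation.ReflTransGen (fun x y => r x y ∨ w x y) p u) :
    ∀ x, Relation.Comp r (Relation.ReflTransGen w) x p →
      Relation.TransGen (SS r w) x u := by
  induction h using Relation.ReflTransGen.head_induction_on with
  | refl => exact fun x hx => Relation.TransGen.single hx
  | head hpq hqu ih =>
    rename_i p q
    rintro x ⟨p₀, hr, hw⟩
    rcases hpq with hr' | hw'
    · exact Relation.TransGen.head ⟨p₀, hr, hw⟩ (ih p ⟨q, hr', Relation.ReflTransGen.refl⟩)
    · exact ih x ⟨p₀, hr, hw.tail hw'⟩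

theorem rS {x p u : A} (hr : r x p)
    (h : Relation.ReflTransGen (fun x y => r x y ∨ w x y) p u) :
    Relation.TransGen (SS r w) x u :=
  rS_aux h x ⟨p, hr, Relation.ReflTransGen.refl⟩

variable {A : Type*}

section Conv
variable (e r : A → A → Prop)

/-- Labelled conversions with a cost multiset. -/
inductive Conv : Multiset (A × Bool) → A → A → Prop where
  | nil : ∀ {a}, Conv 0 a a
  | fwd : ∀ {a b c m}, r a b → Conv m b c → Conv ({(a, false)} + m) a c
  | bwd : ∀ {a b c m}, r b a → Conv m b c → Conv ({(b, false)} + m) a c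
  | eq : ∀ {a b c m}, e a b → Conv m b c → Conv ({(a, true)} + {(b, true)} + m) a c

/-- Cost-annotated `r`-sequences. -/
inductive RT1 : Multiset (A × Bool) → A → A → Prop where
  | nil : ∀ {a}, RT1 0 a a
  | cons : ∀ {a b c m}, r a b → RT1 m b c → RT1 ({(a, false)} + m) a c

/-- Cost-annotated `e`-sequences. -/
inductive RT2 : Multiset (A × Bool) → A → A → Prop where
  | nil : ∀ {a}, RT2 0 a a
  | cons : ∀ {a b c m}, e a b → RT2 m b c → RT2 ({(a, true)} + {(b, true)} + m) a c

end Conv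

variable {e r w : A → A → Prop}

theorem RT1.cast {m m' : Multiset (A × Bool)} {a b : A} (h : RT1 r m a b)
    (hm : m = m') : RT1 r m' a b := hm ▸ h

theorem Conv.cast {m m' : Multiset (A × Bool)} {a b : A} (h : Conv e r m a b)
    (hm : m = m') : Conv e r m' a b := hm ▸ h

theorem Conv.append {m₁ m₂ : Multiset (A × Bool)} {a b c : A}
    (h₁ : Conv e r m₁ a b) (h₂ : Conv e r m₂ b c) : Conv e r (m₁ + m₂) a c := by
  induction h₁ with
  | nil => simpa using h₂
  | fwd h t ih => exact (Conv.fwd h (ih h₂)).cast (by simp [add_assoc])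
  | bwd h t ih => exact (Conv.bwd h (ih h₂)).cast (by simp [add_assoc])
  | eq h t ih => exact (Conv.eq h (ih h₂)).cast (by simp [add_assoc])

theorem RT1.toConv {m : Multiset (A × Bool)} {a b : A} (h : RT1 r m a b) :
    Conv e r m a b := by
  induction h with
  | nil => exact Conv.nil
  | cons h _ ih => exact Conv.fwd h ih

theorem RT2.toConv {m : Multiset (A × Bool)} {a b : A} (h : RT2 e m a b) :
    Conv e r m a b := by
  induction h with
  | nil => exact Conv.nil
  | cons h _ ih => exact Conv.eq h ih

/-- Reverse embedding: an `r`-sequence from `b` to `d` gives a conversion from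
`d` back to `b` with the same cost. -/
theorem RT1.toConvRev {m : Multiset (A × Bool)} {b d : A} (h : RT1 r m b d) :
    Conv e r m d b := by
  induction h with
  | nil => exact Conv.nil
  | cons h _ ih =>
    exact (ih.append (Conv.bwd h Conv.nil)).cast (by simp [add_comm])

theorem RT1.snoc {m : Multiset (A × Bool)} {b x a : A} (h : RT1 r m b x) (hx : r x a) :
    RT1 r (m + {(x, false)}) b a := by
  induction h with
  | nil => exact (RT1.cons hx RT1.nil).cast (by simp)
  | cons h t ih => exact (RT1.cons h (ih hx)).cast (by simp [add_assoc])

theorem RT1.sem {m : Multiset (A × Bool)} {a b : A} (h : RT1 r m a b) :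
    Relation.ReflTransGen r a b := by
  induction h with
  | nil => exact .refl
  | cons h _ ih => exact .head h ih

theorem RT2.sem {m : Multiset (A × Bool)} {a b : A} (h : RT2 e m a b) :
    Relation.ReflTransGen e a b := by
  induction h with
  | nil => exact .refl
  | cons h _ ih => exact .head h ih


/-! ### Path builders -/

theorem convOfSeqFwd (hwe : ∀ a b, w a b → e a b) {p q : A}
    (h : Relation.ReflTransGen (fun x y => r x y ∨ w x y) p q) :
    ∃ m, Conv e r m p q ∧
      ∀ u ∈ m, Relation.ReflTransGen (fun x y => r x y ∨ w x y) p u.1 := by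
  induction h using Relation.ReflTransGen.head_induction_on with
  | refl => exact ⟨0, Conv.nil, by simp⟩
  | head hpq hp'q ih =>
    rename_i p p'
    obtain ⟨m', hc, hb⟩ := ih
    have hstep : Relation.ReflTransGen (fun x y => r x y ∨ w x y) p p' :=
      Relation.ReflTransGen.single hpq
    rcases hpq with hr | hw
    · refine ⟨{(p, false)} + m', Conv.fwd hr hc, ?_⟩
      intro u hu
      rcases Multiset.mem_add.1 hu with hu | hu
      · rw [Multiset.mem_singleton.1 hu]
      · exact hstep.trans (hb u hu)
    · refine ⟨{(p, true)} + {(p', true)} + m', Conv.eq (hwe _ _ hw) hc, ?_⟩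
      intro u hu
      rcases Multiset.mem_add.1 hu with hu | hu
      · rcases Multiset.mem_add.1 hu with hu | hu
        · rw [Multiset.mem_singleton.1 hu]
        · rw [Multiset.mem_singleton.1 hu]; exact hstep
      · exact hstep.trans (hb u hu)

theorem convOfSeqRev (hsym : Symmetric e) (hwe : ∀ a b, w a b → e a b) {p q : A}
    (h : Relation.ReflTransGen (fun x y => r x y ∨ w x y) p q) :
    ∃ m, Conv e r m q p ∧
      ∀ u ∈ m, Relation.ReflTransGen (fun x y => r x y ∨ w x y) p u.1 := by
  induction h using Relation.ReflTransGen.head_induction_on with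
  | refl => exact ⟨0, Conv.nil, by simp⟩
  | head hpq hp'q ih =>
    rename_i p p'
    obtain ⟨m', hc, hb⟩ := ih
    have hstep : Relation.ReflTransGen (fun x y => r x y ∨ w x y) p p' :=
      Relation.ReflTransGen.single hpq
    rcases hpq with hr | hw
    · refine ⟨m' + {(p, false)}, (hc.append (Conv.bwd hr Conv.nil)).cast (by simp), ?_⟩
      intro u hu
      rcases Multiset.mem_add.1 hu with hu | hu
      · exact hstep.trans (hb u hu)
      · rw [Multiset.mem_singleton.1 hu]
    · refine ⟨m' + ({(p', true)} + {(p, true)}),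
        (hc.append (Conv.eq (hsym (hwe _ _ hw)) Conv.nil)).cast (by simp), ?_⟩
      intro u hu
      rcases Multiset.mem_add.1 hu with hu | hu
      · exact hstep.trans (hb u hu)
      · rcases Multiset.mem_add.1 hu with hu | hu
        · rw [Multiset.mem_singleton.1 hu]; exact hstep
        · rw [Multiset.mem_singleton.1 hu]



/-! ### Valley shapes and the main transformation lemma -/

/-- Syntactic valley decomposition of a conversion's measure. -/
def VS (e r : A → A → Prop) (m : Multiset (A × Bool)) (a b : A) : Prop :=
  ∃ c d m1 m2 m3, m = m1 + m2 + m3 ∧ RT1 r m1 a c ∧ RT2 e m2 c d ∧ RT1 r m3 b d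

theorem sigma_left {u : A × Bool} {x : A} {i : Bool}
    (h : Relation.TransGen (SS r w) x u.1) : sigma r w u (x, i) := by
  obtain ⟨u1, u2⟩ := u
  exact Prod.Lex.left _ _ h

theorem sigma_right {x : A} : sigma r w (x, false) (x, true) :=
  Prod.Lex.right _ ⟨rfl, rfl⟩

theorem trans_case {X Y Z m mc : Multiset (A × Bool)} {a b : A}
    (conv : Conv e r mc a b) (hmc : mc = Y + Z) (hm : m = X + Z) (hX : X ≠ 0)
    (hdom : ∀ y ∈ Y, ∃ x ∈ X, sigma r w y x) :
    ∃ m', Conv e r m' a b ∧ MLT (sigma r w) m' m :=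
  ⟨Y + Z, conv.cast hmc, hm ▸ mlt_dm X hX Y Z hdom⟩

theorem step_lemma
    (hsym : Symmetric e)
    (hwe : ∀ a b, w a b → e a b)
    (hii : ∀ a b c, r a b → r a c →
      ∃ d d', Relation.ReflTransGen (fun x y => r x y ∨ w x y) b d ∧
        Relation.ReflGen e d d' ∧
        Relation.ReflTransGen (fun x y => r x y ∨ w x y) c d')
    (hiii : ∀ a b c, e a b → r b c →
      (∃ d, Relation.ReflGen e a d ∧
        Relation.ReflTransGen (fun x y => r x y ∨ w x y) c d) ∨
      (∃ d d' d'', r a d ∧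
        Relation.ReflTransGen (fun x y => r x y ∨ w x y) d d' ∧
        Relation.ReflGen e d' d'' ∧
        Relation.ReflTransGen (fun x y => r x y ∨ w x y) c d'')) :
    ∀ {m : Multiset (A × Bool)} {a b : A}, Conv e r m a b →
      VS e r m a b ∨ ∃ m', Conv e r m' a b ∧ MLT (sigma r w) m' m := by
  intro m a b hc
  induction hc with
  | nil => exact Or.inl ⟨_, _, 0, 0, 0, by simp, RT1.nil, RT2.nil, RT1.nil⟩
  | fwd h t ih =>
    rename_i a x b mt
    rcases ih with ⟨c, d, m1, m2, m3, hm, h1, h2, h3⟩ | ⟨mt', hc', hlt⟩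
    · exact Or.inl ⟨c, d, {(a, false)} + m1, m2, m3,
        by simp [hm, add_comm, add_left_comm, add_assoc, Multiset.cons_swap], RT1.cons h h1, h2, h3⟩
    · exact Or.inr ⟨_, Conv.fwd h hc', hlt.add _⟩
  | eq h t ih =>
    rename_i a x b mt
    rcases ih with ⟨c, d, m1, m2, m3, hm, h1, h2, h3⟩ | ⟨mt', hc', hlt⟩
    · cases h1 with
      | nil =>
        exact Or.inl ⟨a, d, 0, {(a, true)} + {(x, true)} + m2, m3,
          by simp [hm, add_comm, add_left_comm, add_assoc, Multiset.cons_swap], RT1.nil, RT2.cons h h2, h3⟩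
      | cons hxy h1' =>
        rename_i y m1'
        -- cliff `a ⊢⊣ x → y`
        have tail : Conv e r (m1' + (m2 + m3)) y b :=
          (h1'.toConv).append ((h2.toConv).append h3.toConvRev)
        rcases hiii a x y h hxy with ⟨D, hrg, hpath⟩ | ⟨D, D', D'', hrD, hp1, hrg, hp2⟩
        · obtain ⟨mψ, cψ, bψ⟩ := convOfSeqRev hsym hwe hpath
          have mid : Conv e r (mψ + (m1' + (m2 + m3))) D b := cψ.append tail
          cases hrg with
          | refl =>
            refine Or.inr (trans_case (X := {(a, true)} + ({(x, true)} + {(x, false)}))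
              (Y := mψ) (Z := m1' + (m2 + m3)) mid rfl
              (by simp [hm, add_comm, add_left_comm, add_assoc, Multiset.cons_swap]) (by simp) ?_)
            intro u hu
            exact ⟨(x, true), by simp, sigma_left (rS hxy (bψ u hu))⟩
          | single hE =>
            refine Or.inr (trans_case (X := {(x, true)} + {(x, false)})
              (Y := {(D, true)} + mψ) (Z := {(a, true)} + (m1' + (m2 + m3)))
              (Conv.eq hE mid) (by simp [add_comm, add_left_comm, add_assoc, Multiset.cons_swap])
              (by simp [hm, add_comm, add_left_comm, add_assoc, Multiset.cons_swap]) (by simp) ?_)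
            intro u hu
            rcases Multiset.mem_add.1 hu with hu | hu
            · rw [Multiset.mem_singleton.1 hu]
              exact ⟨(x, true), by simp, sigma_left (rS hxy hpath)⟩
            · exact ⟨(x, true), by simp, sigma_left (rS hxy (bψ u hu))⟩
        · obtain ⟨mφ, cφ, bφ⟩ := convOfSeqFwd hwe hp1
          obtain ⟨mψ, cψ, bψ⟩ := convOfSeqRev hsym hwe hp2
          cases hrg with
          | refl =>
            refine Or.inr (trans_case (X := {(a, true)} + ({(x, true)} + {(x, false)}))
              (Y := {(a, false)} + (mφ + mψ)) (Z := m1' + (m2 + m3))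
              (Conv.fwd hrD (cφ.append (cψ.append tail)))
              (by simp [add_comm, add_left_comm, add_assoc, Multiset.cons_swap])
              (by simp [hm, add_comm, add_left_comm, add_assoc, Multiset.cons_swap]) (by simp) ?_)
            intro u hu
            rcases Multiset.mem_add.1 hu with hu | hu
            · rw [Multiset.mem_singleton.1 hu]
              exact ⟨(a, true), by simp, sigma_right⟩
            · rcases Multiset.mem_add.1 hu with hu | hu
              · exact ⟨(a, true), by simp, sigma_left (rS hrD (bφ u hu))⟩
              · exact ⟨(x, true), by simp, sigma_left (rS hxy (bψ u hu))⟩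
          | single hE =>
            refine Or.inr (trans_case (X := {(a, true)} + ({(x, true)} + {(x, false)}))
              (Y := {(a, false)} + (mφ + ({(D', true)} + ({(D'', true)} + mψ))))
              (Z := m1' + (m2 + m3))
              (Conv.fwd hrD (cφ.append (Conv.eq hE (cψ.append tail))))
              (by simp [add_comm, add_left_comm, add_assoc, Multiset.cons_swap])
              (by simp [hm, add_comm, add_left_comm, add_assoc, Multiset.cons_swap]) (by simp) ?_)
            intro u hu
            rcases Multiset.mem_add.1 hu with hu | hu
            · rw [Multiset.mem_singleton.1 hu]
              exact ⟨(a, true), by simp, sigma_right⟩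
            · rcases Multiset.mem_add.1 hu with hu | hu
              · exact ⟨(a, true), by simp, sigma_left (rS hrD (bφ u hu))⟩
              · rcases Multiset.mem_add.1 hu with hu | hu
                · rw [Multiset.mem_singleton.1 hu]
                  exact ⟨(a, true), by simp, sigma_left (rS hrD hp1)⟩
                · rcases Multiset.mem_add.1 hu with hu | hu
                  · rw [Multiset.mem_singleton.1 hu]
                    exact ⟨(x, true), by simp, sigma_left (rS hxy hp2)⟩
                  · exact ⟨(x, true), by simp, sigma_left (rS hxy (bψ u hu))⟩
    · exact Or.inr ⟨_, Conv.eq h hc', hlt.add _⟩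
  | bwd h t ih =>
    rename_i a x b mt
    rcases ih with ⟨c, d, m1, m2, m3, hm, h1, h2, h3⟩ | ⟨mt', hc', hlt⟩
    · cases h1 with
      | cons hxy h1' =>
        rename_i y m1'
        -- peak `a ← x → y`
        have tail : Conv e r (m1' + (m2 + m3)) y b :=
          (h1'.toConv).append ((h2.toConv).append h3.toConvRev)
        obtain ⟨D, D', hp1, hrg, hp2⟩ := hii x a y h hxy
        obtain ⟨mφ, cφ, bφ⟩ := convOfSeqFwd hwe hp1
        obtain ⟨mψ, cψ, bψ⟩ := convOfSeqRev hsym hwe hp2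
        cases hrg with
        | refl =>
          refine Or.inr (trans_case (X := {(x, false)} + {(x, false)})
            (Y := mφ + mψ) (Z := m1' + (m2 + m3))
            (cφ.append (cψ.append tail))
            (by simp [add_comm, add_left_comm, add_assoc, Multiset.cons_swap])
            (by simp [hm, add_comm, add_left_comm, add_assoc, Multiset.cons_swap]) (by simp) ?_)
          intro u hu
          rcases Multiset.mem_add.1 hu with hu | hu
          · exact ⟨(x, false), by simp, sigma_left (rS h (bφ u hu))⟩
          · exact ⟨(x, false), by simp, sigma_left (rS hxy (bψ u hu))⟩
        | single hE =>
          refine Or.inr (trans_case (X := {(x, false)} + {(x, false)})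
            (Y := mφ + ({(D, true)} + ({(D', true)} + mψ))) (Z := m1' + (m2 + m3))
            (cφ.append (Conv.eq hE (cψ.append tail)))
            (by simp [add_comm, add_left_comm, add_assoc, Multiset.cons_swap])
            (by simp [hm, add_comm, add_left_comm, add_assoc, Multiset.cons_swap]) (by simp) ?_)
          intro u hu
          rcases Multiset.mem_add.1 hu with hu | hu
          · exact ⟨(x, false), by simp, sigma_left (rS h (bφ u hu))⟩
          · rcases Multiset.mem_add.1 hu with hu | hu
            · rw [Multiset.mem_singleton.1 hu]
              exact ⟨(x, false), by simp, sigma_left (rS h hp1)⟩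
            · rcases Multiset.mem_add.1 hu with hu | hu
              · rw [Multiset.mem_singleton.1 hu]
                exact ⟨(x, false), by simp, sigma_left (rS hxy hp2)⟩
              · exact ⟨(x, false), by simp, sigma_left (rS hxy (bψ u hu))⟩
      | nil =>
        cases h2 with
        | nil =>
          exact Or.inl ⟨a, a, 0, 0, m3 + {(x, false)},
            by simp [hm, add_comm, add_left_comm, add_assoc, Multiset.cons_swap], RT1.nil, RT2.nil, h3.snoc h⟩
        | cons hxz h2' =>
          rename_i z m2'
          -- cliff `a ← x ⊢⊣ z`
          have tail2 : Conv e r (m2' + m3) z b := (h2'.toConv).append h3.toConvRev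
          rcases hiii z x a (hsym hxz) h with ⟨D, hrg, hpath⟩ | ⟨D, D', D'', hrD, hp1, hrg, hp2⟩
          · obtain ⟨mφ, cφ, bφ⟩ := convOfSeqFwd hwe hpath
            cases hrg with
            | refl =>
              refine Or.inr (trans_case (X := {(x, false)} + ({(x, true)} + {(z, true)}))
                (Y := mφ) (Z := m2' + m3) (cφ.append tail2) rfl
                (by simp [hm, add_comm, add_left_comm, add_assoc, Multiset.cons_swap]) (by simp) ?_)
              intro u hu
              exact ⟨(x, false), by simp, sigma_left (rS h (bφ u hu))⟩
            | single hE =>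
              refine Or.inr (trans_case (X := {(x, false)} + {(x, true)})
                (Y := mφ + {(D, true)}) (Z := {(z, true)} + (m2' + m3))
                (cφ.append (Conv.eq (hsym hE) tail2))
                (by simp [add_comm, add_left_comm, add_assoc, Multiset.cons_swap])
                (by simp [hm, add_comm, add_left_comm, add_assoc, Multiset.cons_swap]) (by simp) ?_)
              intro u hu
              rcases Multiset.mem_add.1 hu with hu | hu
              · exact ⟨(x, false), by simp, sigma_left (rS h (bφ u hu))⟩
              · rw [Multiset.mem_singleton.1 hu]
                exact ⟨(x, false), by simp, sigma_left (rS h hpath)⟩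
          · obtain ⟨mφ, cφ, bφ⟩ := convOfSeqFwd hwe hp2
            obtain ⟨mψ, cψ, bψ⟩ := convOfSeqRev hsym hwe hp1
            have stepDz : Conv e r ({(z, false)} + 0) D z := Conv.bwd hrD Conv.nil
            cases hrg with
            | refl =>
              refine Or.inr (trans_case (X := {(x, false)} + ({(x, true)} + {(z, true)}))
                (Y := mφ + (mψ + {(z, false)})) (Z := m2' + m3)
                (cφ.append (cψ.append (stepDz.append tail2)))
                (by simp [add_comm, add_left_comm, add_assoc, Multiset.cons_swap])
                (by simp [hm, add_comm, add_left_comm, add_assoc, Multiset.cons_swap]) (by simp) ?_)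
              intro u hu
              rcases Multiset.mem_add.1 hu with hu | hu
              · exact ⟨(x, false), by simp, sigma_left (rS h (bφ u hu))⟩
              · rcases Multiset.mem_add.1 hu with hu | hu
                · exact ⟨(z, true), by simp, sigma_left (rS hrD (bψ u hu))⟩
                · rw [Multiset.mem_singleton.1 hu]
                  exact ⟨(z, true), by simp, sigma_right⟩
            | single hE =>
              refine Or.inr (trans_case (X := {(x, false)} + ({(x, true)} + {(z, true)}))
                (Y := mφ + ({(D'', true)} + ({(D', true)} + (mψ + {(z, false)}))))
                (Z := m2' + m3)
                (cφ.append (Conv.eq (hsym hE) (cψ.append (stepDz.append tail2))))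
                (by simp [add_comm, add_left_comm, add_assoc, Multiset.cons_swap])
                (by simp [hm, add_comm, add_left_comm, add_assoc, Multiset.cons_swap]) (by simp) ?_)
              intro u hu
              rcases Multiset.mem_add.1 hu with hu | hu
              · exact ⟨(x, false), by simp, sigma_left (rS h (bφ u hu))⟩
              · rcases Multiset.mem_add.1 hu with hu | hu
                · rw [Multiset.mem_singleton.1 hu]
                  exact ⟨(x, false), by simp, sigma_left (rS h hp2)⟩
                · rcases Multiset.mem_add.1 hu with hu | hu
                  · rw [Multiset.mem_singleton.1 hu]
                    exact ⟨(z, true), by simp, sigma_left (rS hrD hp1)⟩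
                  · rcases Multiset.mem_add.1 hu with hu | hu
                    · exact ⟨(z, true), by simp, sigma_left (rS hrD (bψ u hu))⟩
                    · rw [Multiset.mem_singleton.1 hu]
                      exact ⟨(z, true), by simp, sigma_right⟩
    · exact Or.inr ⟨_, Conv.bwd h hc', hlt.add _⟩



/-! ### Wrap-up -/

theorem main_valley
    (hsym : Symmetric e)
    (hwe : ∀ a b, w a b → e a b)
    (hSN : ∀ f : ℕ → A,
      ¬ (∀ n : ℕ, Relation.Comp r (Relation.ReflTransGen w) (f n) (f (n + 1))))
    (hii : ∀ a b c, r a b → r a c →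
      ∃ d d', Relation.ReflTransGen (fun x y => r x y ∨ w x y) b d ∧
        Relation.ReflGen e d d' ∧
        Relation.ReflTransGen (fun x y => r x y ∨ w x y) c d')
    (hiii : ∀ a b c, e a b → r b c →
      (∃ d, Relation.ReflGen e a d ∧
        Relation.ReflTransGen (fun x y => r x y ∨ w x y) c d) ∨
      (∃ d d' d'', r a d ∧
        Relation.ReflTransGen (fun x y => r x y ∨ w x y) d d' ∧
        Relation.ReflGen e d' d'' ∧
        Relation.ReflTransGen (fun x y => r x y ∨ w x y) c d'')) :
    ∀ (m : Multiset (A × Bool)) (a b : A), Conv e r m a b →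
      ∃ c d, Relation.ReflTransGen r a c ∧ Relation.ReflTransGen e c d ∧
        Relation.ReflTransGen r b d := by
  intro m
  induction m using (mlt_wf' (wf_sigma hSN)).induction with
  | _ m ih =>
    intro a b hc
    rcases step_lemma hsym hwe hii hiii hc with
      ⟨c, d, m1, m2, m3, -, h1, h2, h3⟩ | ⟨m', hc', hlt⟩
    · exact ⟨c, d, h1.sem, h2.sem, h3.sem⟩
    · exact ih m' hlt a b hc'

theorem ofConversion {a b : A}
    (h : Relation.ReflTransGen (fun x y => r x y ∨ r y x ∨ e x y) a b) :
    ∃ m, Conv e r m a b := by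
  induction h using Relation.ReflTransGen.head_induction_on with
  | refl => exact ⟨0, Conv.nil⟩
  | head hstep _ ih =>
    obtain ⟨m', hc⟩ := ih
    rcases hstep with h' | h' | h'
    · exact ⟨_, Conv.fwd h' hc⟩
    · exact ⟨_, Conv.bwd h' hc⟩
    · exact ⟨_, Conv.eq h' hc⟩

theorem rtg_eqvGen {c d : A} (h : Relation.ReflTransGen e c d) : Relation.EqvGen e c d := by
  induction h with
  | refl => exact Relation.EqvGen.refl _
  | tail _ hstep ih => exact Relation.EqvGen.trans _ _ _ ih (Relation.EqvGen.rel _ _ hstep)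

end AotoToyamaAux



/-- Aoto–Toyama abstract rewriting theorem: under hypotheses (i)–(iii), the
relation `r` (→) is Church–Rosser modulo the equivalence closure of `e` (⊢⊣),
where `w` (⇝) is a sub-relation of `e` and `⇒ = → ∪ ⇝`. -/
theorem aoto_toyama_church_rosser_modulo {A : Type*} (e r w : A → A → Prop)
    (hsym : Symmetric e)
    (hwe : ∀ a b, w a b → e a b)
    -- (i) `→ · ⇝*` is strongly normalizing
    (hSN : ∀ f : ℕ → A,
      ¬ (∀ n : ℕ, Relation.Comp r (Relation.ReflTransGen w) (f n) (f (n + 1))))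
    -- (ii) `← · → ⊆ ⇒* · (⊢⊣)^= · ⇐*`
    (hii : ∀ a b c, r a b → r a c →
      ∃ d d', Relation.ReflTransGen (fun x y => r x y ∨ w x y) b d ∧
        Relation.ReflGen e d d' ∧
        Relation.ReflTransGen (fun x y => r x y ∨ w x y) c d')
    -- (iii) `⊢⊣ · → ⊆ ((⊢⊣)^= · ⇐*) ∪ (→ · ⇒* · (⊢⊣)^= · ⇐*)`
    (hiii : ∀ a b c, e a b → r b c →
      (∃ d, Relation.ReflGen e a d ∧
        Relation.ReflTransGen (fun x y => r x y ∨ w x y) c d) ∨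
      (∃ d d' d'', r a d ∧
        Relation.ReflTransGen (fun x y => r x y ∨ w x y) d d' ∧
        Relation.ReflGen e d' d'' ∧
        Relation.ReflTransGen (fun x y => r x y ∨ w x y) c d'')) :
    -- `→` is Church–Rosser modulo the equivalence closure of `⊢⊣`
    ∀ a b, Relation.ReflTransGen (fun x y => r x y ∨ r y x ∨ e x y) a b →
      ∃ c d, Relation.ReflTransGen r a c ∧ Relation.EqvGen e c d ∧
        Relation.ReflTransGen r b d := by
  
  intro a b h
  obtain ⟨m, hc⟩ := AotoToyamaAux.ofConversion h
  obtain ⟨c, d, h1, h2, h3⟩ := AotoToyamaAux.main_valley hsym hwe hSN hii hiii m a b hc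
  exact ⟨c, d, h1, AotoToyamaAux.rtg_eqvGen h2, h3⟩
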